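/- A linear map F ∈ GL(2,ℂ) is conjugate in GL(2,ℂ) to its inverse if and only if either F² = id, or F is conjugate to one of: the unipotent Jordan block [[1,1],[0,1]], the block [[-1,1],[0,-1]], or a diagonal matrix diag(μ, μ⁻¹) for some nonzero μ ∈ ℂ. -/

import Mathlib

open Matrix

noncomputable def mkGL (M : Matrix (Fin 2) (Fin 2) ℂ) (h : M.det ≠ 0) : GL (Fin 2) ℂ :=
  ⟨M, M⁻¹, Matrix.mul_nonsing_inv M (isUnit_iff_ne_zero.mpr h),
    Matrix.nonsing_inv_mul M (isUnit_iff_ne_zero.mpr h)⟩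

@[simp] lemma mkGL_coe (M : Matrix (Fin 2) (Fin 2) ℂ) (h : M.det ≠ 0) :
    ((mkGL M h : GL (Fin 2) ℂ) : Matrix (Fin 2) (Fin 2) ℂ) = M := rfl

lemma conj_eq (F : GL (Fin 2) ℂ) (M J : Matrix (Fin 2) (Fin 2) ℂ) (h : M.det ≠ 0)
    (hFP : (F : Matrix (Fin 2) (Fin 2) ℂ) * M = M * J) :
    ((((mkGL M h)⁻¹ : GL (Fin 2) ℂ) * F * mkGL M h : GL (Fin 2) ℂ) : Matrix (Fin 2) (Fin 2) ℂ) = J := by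
  show ((mkGL M h)⁻¹ : GL (Fin 2) ℂ).1 * (F : Matrix (Fin 2) (Fin 2) ℂ) * M = J
  have h1 : ((mkGL M h)⁻¹ : GL (Fin 2) ℂ).1 = M⁻¹ := rfl
  rw [h1, mul_assoc, hFP, ← mul_assoc, Matrix.nonsing_inv_mul M (isUnit_iff_ne_zero.mpr h), one_mul]

lemma ch2 (A : Matrix (Fin 2) (Fin 2) ℂ) :
    A * A = A.trace • A - A.det • (1 : Matrix (Fin 2) (Fin 2) ℂ) := by
  ext i j
  fin_cases i <;> fin_cases j <;>
    simp [Matrix.mul_apply, Fin.sum_univ_two, Matrix.trace_fin_two, Matrix.det_fin_two,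
      Matrix.one_apply] <;> ring

lemma diag_eq (μ : ℂ) : Matrix.diagonal ![μ, μ⁻¹] = !![μ, 0; 0, μ⁻¹] := by
  ext i j; fin_cases i <;> fin_cases j <;> simp [Matrix.diagonal]

lemma forward (F : GL (Fin 2) ℂ) (H : GL (Fin 2) ℂ) (hH : H⁻¹ * F * H = F⁻¹) :
      (F * F = 1 ∨
       (∃ P : GL (Fin 2) ℂ,
          ((P⁻¹ * F * P : GL (Fin 2) ℂ) : Matrix (Fin 2) (Fin 2) ℂ) = !![1, 1; 0, 1]) ∨
       (∃ P : GL (Fin 2) ℂ,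
          ((P⁻¹ * F * P : GL (Fin 2) ℂ) : Matrix (Fin 2) (Fin 2) ℂ) = !![-1, 1; 0, -1]) ∨
       (∃ (P : GL (Fin 2) ℂ) (μ : ℂ), μ ≠ 0 ∧
          ((P⁻¹ * F * P : GL (Fin 2) ℂ) : Matrix (Fin 2) (Fin 2) ℂ) =
            Matrix.diagonal ![μ, μ⁻¹])) := by
  obtain ⟨A, hA⟩ : ∃ A : Matrix (Fin 2) (Fin 2) ℂ, (F : Matrix (Fin 2) (Fin 2) ℂ) = A := ⟨_, rfl⟩
  have hdu : IsUnit A.det := by rw [← hA]; exact (Matrix.isUnit_iff_isUnit_det _).mp ⟨F, rfl⟩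
  have hd0 : A.det ≠ 0 := hdu.ne_zero
  have hHu : IsUnit ((H : Matrix (Fin 2) (Fin 2) ℂ)).det := (Matrix.isUnit_iff_isUnit_det _).mp ⟨H, rfl⟩
  have hH' : ((H : Matrix (Fin 2) (Fin 2) ℂ))⁻¹ * A * (H : Matrix (Fin 2) (Fin 2) ℂ) = A⁻¹ := by
    rw [← hA]
    have := congrArg (Units.val) hH
    simpa [Matrix.coe_units_inv] using this
  have hHr := Matrix.mul_nonsing_inv _ hHu
  have hHl := Matrix.nonsing_inv_mul _ hHu
  have htr : A⁻¹.trace = A.trace := by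
    rw [← hH', Matrix.trace_mul_cycle, hHr, one_mul]
  have hdet : A⁻¹.det = A.det := by
    have h1 : ((H : Matrix (Fin 2) (Fin 2) ℂ))⁻¹.det * ((H : Matrix (Fin 2) (Fin 2) ℂ)).det = 1 := by
      rw [← Matrix.det_mul, hHl, Matrix.det_one]
    rw [← hH', Matrix.det_mul, Matrix.det_mul]
    linear_combination A.det * h1
  have hAAinv := Matrix.mul_nonsing_inv _ hdu
  have hdd : A.det * A.det = 1 := by
    have h2 : A.det * A⁻¹.det = 1 := by rw [← Matrix.det_mul, hAAinv, Matrix.det_one]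
    rw [hdet] at h2; exact h2
  have hK : A * ((A.det)⁻¹ • (A.trace • (1 : Matrix (Fin 2) (Fin 2) ℂ) - A)) = 1 := by
    rw [Matrix.mul_smul, mul_sub, Matrix.mul_smul, mul_one, ch2 A]
    rw [sub_sub_cancel, smul_smul, inv_mul_cancel₀ hd0, one_smul]
  have hAinv : A⁻¹ = (A.det)⁻¹ • (A.trace • (1 : Matrix (Fin 2) (Fin 2) ℂ) - A) :=
    Matrix.inv_eq_right_inv hK
  have htr2 : A⁻¹.trace = (A.det)⁻¹ * A.trace := by
    rw [hAinv, Matrix.trace_smul, Matrix.trace_sub, Matrix.trace_smul, Matrix.trace_one]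
    simp only [Fintype.card_fin, smul_eq_mul, Nat.cast_ofNat]; ring
  have htt : A.trace = (A.det)⁻¹ * A.trace := by rw [← htr2, htr]
  have hdcases : A.det = 1 ∨ A.det = -1 := by
    have h3 : (A.det - 1) * (A.det + 1) = 0 := by linear_combination hdd
    rcases mul_eq_zero.mp h3 with h | h
    · exact Or.inl (by linear_combination h)
    · exact Or.inr (by linear_combination h)
  rcases hdcases with hd1 | hdm1
  swap
  · -- det = -1 : trace = 0, F² = 1
    have ht0 : A.trace = 0 := by
      rw [hdm1] at htt
      have h4 : A.trace = -A.trace := by nth_rewrite 1 [htt]; norm_num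
      linear_combination h4 / 2
    refine Or.inl (Units.ext ?_)
    show (F : Matrix (Fin 2) (Fin 2) ℂ) * F = 1
    rw [hA, ch2, ht0, hdm1]
    simp
  -- det = 1
  have hd1' : A 0 0 * A 1 1 - A 0 1 * A 1 0 = 1 := by
    rw [← Matrix.det_fin_two A]; exact hd1
  by_cases ht2 : A.trace = 2
  · -- trace = 2
    have htr' : A 0 0 + A 1 1 = 2 := by rw [← Matrix.trace_fin_two A]; exact ht2
    by_cases hA1 : A = 1
    · refine Or.inl (Units.ext ?_)
      show (F : Matrix (Fin 2) (Fin 2) ℂ) * F = 1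
      rw [hA, hA1, one_mul]
    by_cases hc : A 1 0 ≠ 0
    · refine Or.inr (Or.inl ?_)
      have hdM : (!![A 0 0 - 1, 1; A 1 0, 0]).det ≠ 0 := by
        rw [Matrix.det_fin_two_of]; simpa using hc
      refine ⟨mkGL _ hdM, conj_eq F _ _ hdM ?_⟩
      rw [hA]
      simp only [← Matrix.ext_iff, Fin.forall_fin_two, Matrix.mul_apply, Fin.sum_univ_two]
      refine ⟨⟨?_, ?_⟩, ?_, ?_⟩ <;> simp
      all_goals first
        | linear_combination A 0 0 * htr' - hd1'
        | linear_combination A 1 0 * htr'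
        | ring1
    · push_neg at hc
      have ha : A 0 0 = 1 := by
        have h5 : (A 0 0 - 1)^2 = 0 := by
          rw [hc] at hd1'
          linear_combination A 0 0 * htr' - hd1'
        have := pow_eq_zero_iff (n := 2) (by norm_num) |>.mp h5
        linear_combination this
      have he : A 1 1 = 1 := by linear_combination htr' - ha
      have hb : A 0 1 ≠ 0 := by
        intro hb0
        exact hA1 (by rw [Matrix.eta_fin_two A, ha, he, hb0, hc, Matrix.one_fin_two])
      refine Or.inr (Or.inl ?_)
      have hdM : (!![A 0 1, 0; 0, 1]).det ≠ 0 := by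
        rw [Matrix.det_fin_two_of]; simpa using hb
      refine ⟨mkGL _ hdM, conj_eq F _ _ hdM ?_⟩
      rw [hA]
      simp only [← Matrix.ext_iff, Fin.forall_fin_two, Matrix.mul_apply, Fin.sum_univ_two]
      refine ⟨⟨?_, ?_⟩, ?_, ?_⟩ <;> simp [ha, he, hc] <;> ring1
  by_cases ht2' : A.trace = -2
  · -- trace = -2
    have htr' : A 0 0 + A 1 1 = -2 := by rw [← Matrix.trace_fin_two A]; exact ht2'
    by_cases hA1 : A = -1
    · refine Or.inl (Units.ext ?_)
      show (F : Matrix (Fin 2) (Fin 2) ℂ) * F = 1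
      rw [hA, hA1]; simp
    by_cases hc : A 1 0 ≠ 0
    · refine Or.inr (Or.inr (Or.inl ?_))
      have hdM : (!![A 0 0 + 1, 1; A 1 0, 0]).det ≠ 0 := by
        rw [Matrix.det_fin_two_of]; simpa using hc
      refine ⟨mkGL _ hdM, conj_eq F _ _ hdM ?_⟩
      rw [hA]
      simp only [← Matrix.ext_iff, Fin.forall_fin_two, Matrix.mul_apply, Fin.sum_univ_two]
      refine ⟨⟨?_, ?_⟩, ?_, ?_⟩ <;> simp
      all_goals first
        | linear_combination A 0 0 * htr' - hd1'
        | linear_combination A 1 0 * htr'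
        | ring1
    · push_neg at hc
      have ha : A 0 0 = -1 := by
        have h5 : (A 0 0 + 1)^2 = 0 := by
          rw [hc] at hd1'
          linear_combination A 0 0 * htr' - hd1'
        have := pow_eq_zero_iff (n := 2) (by norm_num) |>.mp h5
        linear_combination this
      have he : A 1 1 = -1 := by linear_combination htr' - ha
      have hb : A 0 1 ≠ 0 := by
        intro hb0
        refine hA1 ?_
        rw [Matrix.eta_fin_two A, ha, he, hb0, hc]
        ext i j; fin_cases i <;> fin_cases j <;> simp
      refine Or.inr (Or.inr (Or.inl ?_))
      have hdM : (!![A 0 1, 0; 0, 1]).det ≠ 0 := by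
        rw [Matrix.det_fin_two_of]; simpa using hb
      refine ⟨mkGL _ hdM, conj_eq F _ _ hdM ?_⟩
      rw [hA]
      simp only [← Matrix.ext_iff, Fin.forall_fin_two, Matrix.mul_apply, Fin.sum_univ_two]
      refine ⟨⟨?_, ?_⟩, ?_, ?_⟩ <;> simp [ha, he, hc] <;> ring1
  · -- distinct eigenvalues
    refine Or.inr (Or.inr (Or.inr ?_))
    obtain ⟨s, hs⟩ := IsAlgClosed.exists_pow_nat_eq (A.trace ^ 2 - 4) (n := 2) (by norm_num)
    have hs0 : s ≠ 0 := by
      intro h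
      rw [h] at hs
      have h6 : (A.trace - 2) * (A.trace + 2) = 0 := by linear_combination -hs
      rcases mul_eq_zero.mp h6 with h | h
      · exact ht2 (by linear_combination h)
      · exact ht2' (by linear_combination h)
    set μ := (A.trace + s) / 2 with hμdef
    set ν := (A.trace - s) / 2 with hνdef
    have hμν : μ * ν = 1 := by
      field_simp [hμdef, hνdef]
      linear_combination (-1/4 : ℂ) * hs
    have hsum : μ + ν = A.trace := by rw [hμdef, hνdef]; ring
    have hne : μ ≠ ν := by
      intro h
      apply hs0
      have : μ - ν = s := by rw [hμdef, hνdef]; ring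
      rw [h] at this; linear_combination -this
    have hμ0 : μ ≠ 0 := left_ne_zero_of_mul_eq_one hμν
    have hνinv : ν = μ⁻¹ := eq_inv_of_mul_eq_one_right hμν
    have hcμ : μ ^ 2 - A.trace * μ + 1 = 0 := by rw [← hsum, ← hμν]; ring
    have hcν : ν ^ 2 - A.trace * ν + 1 = 0 := by rw [← hsum, ← hμν]; ring
    have htr' : A 0 0 + A 1 1 = A.trace := (Matrix.trace_fin_two A).symm
    by_cases hb : A 0 1 ≠ 0
    · have hdM : (!![A 0 1, A 0 1; μ - A 0 0, ν - A 0 0]).det ≠ 0 := by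
        rw [Matrix.det_fin_two_of]
        intro h
        have h7 : A 0 1 * (ν - μ) = 0 := by linear_combination h
        rcases mul_eq_zero.mp h7 with h | h
        · exact hb h
        · exact hne (by linear_combination -h)
      refine ⟨mkGL _ hdM, μ, hμ0, ?_⟩
      rw [diag_eq, ← hνinv]
      refine conj_eq F _ _ hdM ?_
      rw [hA]
      simp only [← Matrix.ext_iff, Fin.forall_fin_two, Matrix.mul_apply, Fin.sum_univ_two]
      refine ⟨⟨?_, ?_⟩, ?_, ?_⟩ <;> simp
      all_goals first
        | linear_combination -hcμ + μ * htr' - hd1'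
        | linear_combination -hcν + ν * htr' - hd1'
        | ring1
    · push_neg at hb
      by_cases hcc : A 1 0 ≠ 0
      · have hdM : (!![μ - A 1 1, ν - A 1 1; A 1 0, A 1 0]).det ≠ 0 := by
          rw [Matrix.det_fin_two_of]
          intro h
          have h7 : A 1 0 * (μ - ν) = 0 := by linear_combination h
          rcases mul_eq_zero.mp h7 with h | h
          · exact hcc h
          · exact hne (by linear_combination h)
        refine ⟨mkGL _ hdM, μ, hμ0, ?_⟩
        rw [diag_eq, ← hνinv]
        refine conj_eq F _ _ hdM ?_
        have hd1'' : A 0 0 * A 1 1 = 1 := by rw [hb] at hd1'; linear_combination hd1'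
        rw [hA]
        simp only [← Matrix.ext_iff, Fin.forall_fin_two, Matrix.mul_apply, Fin.sum_univ_two]
        refine ⟨⟨?_, ?_⟩, ?_, ?_⟩ <;> simp [hb]
        all_goals first
          | linear_combination -hcμ + μ * htr' - hd1''
          | linear_combination -hcν + ν * htr' - hd1''
          | ring1
      · push_neg at hcc
        have hd1'' : A 0 0 * A 1 1 = 1 := by rw [hb, hcc] at hd1'; linear_combination hd1'
        have ha0 : A 0 0 ≠ 0 := left_ne_zero_of_mul_eq_one hd1''
        refine ⟨1, A 0 0, ha0, ?_⟩
        have h8 : (1 : GL (Fin 2) ℂ)⁻¹ * F * 1 = F := by group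
        rw [h8, diag_eq]
        show (F : Matrix (Fin 2) (Fin 2) ℂ) = _
        rw [hA, Matrix.eta_fin_two A, hb, hcc, eq_inv_of_mul_eq_one_right hd1'']
        simp

lemma rev_of_conj (F P H₀ : GL (Fin 2) ℂ)
    (h : H₀⁻¹ * (P⁻¹ * F * P) * H₀ = (P⁻¹ * F * P)⁻¹) :
    ∃ H : GL (Fin 2) ℂ, H⁻¹ * F * H = F⁻¹ := by
  refine ⟨P * H₀ * P⁻¹, ?_⟩
  have h2 : P * ((P⁻¹ * F * P)⁻¹) * P⁻¹ = F⁻¹ := by group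
  rw [← h2, ← h]; group

lemma conj_unit (G H₀ : GL (Fin 2) ℂ) (J K : Matrix (Fin 2) (Fin 2) ℂ)
    (hG : (G : Matrix (Fin 2) (Fin 2) ℂ) = J) (hJK : J * K = 1)
    (hc : ((H₀⁻¹ : GL (Fin 2) ℂ) : Matrix (Fin 2) (Fin 2) ℂ) * J * (H₀ : Matrix (Fin 2) (Fin 2) ℂ) = K) :
    H₀⁻¹ * G * H₀ = G⁻¹ := by
  apply Units.ext
  show ((H₀⁻¹ : GL (Fin 2) ℂ) : Matrix (Fin 2) (Fin 2) ℂ) * G * H₀ = _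
  rw [hG, hc, Matrix.coe_units_inv, hG, Matrix.inv_eq_right_inv hJK]

theorem reversible_GL2_iff (F : GL (Fin 2) ℂ) :
    (∃ H : GL (Fin 2) ℂ, H⁻¹ * F * H = F⁻¹) ↔
      (F * F = 1 ∨
       (∃ P : GL (Fin 2) ℂ,
          ((P⁻¹ * F * P : GL (Fin 2) ℂ) : Matrix (Fin 2) (Fin 2) ℂ) = !![1, 1; 0, 1]) ∨
       (∃ P : GL (Fin 2) ℂ,
          ((P⁻¹ * F * P : GL (Fin 2) ℂ) : Matrix (Fin 2) (Fin 2) ℂ) = !![-1, 1; 0, -1]) ∨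
       (∃ (P : GL (Fin 2) ℂ) (μ : ℂ), μ ≠ 0 ∧
          ((P⁻¹ * F * P : GL (Fin 2) ℂ) : Matrix (Fin 2) (Fin 2) ℂ) =
            Matrix.diagonal ![μ, μ⁻¹])) := by
  constructor
  · rintro ⟨H, hH⟩
    exact forward F H hH
  · rintro (h | ⟨P, hP⟩ | ⟨P, hP⟩ | ⟨P, μ, hμ, hP⟩)
    · exact ⟨1, by simpa using eq_inv_of_mul_eq_one_left h⟩
    · refine rev_of_conj F P (mkGL !![1,0;0,-1] (by norm_num [Matrix.det_fin_two])) ?_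
      refine conj_unit _ _ _ !![1,-1;0,1] hP (by norm_num [Matrix.mul_fin_two, ← Matrix.one_fin_two]) ?_
      show (!![(1:ℂ),0;0,-1])⁻¹ * _ * _ = _
      rw [Matrix.inv_eq_right_inv (by norm_num [Matrix.mul_fin_two, ← Matrix.one_fin_two] :
        (!![(1:ℂ),0;0,-1]) * !![1,0;0,-1] = 1)]
      norm_num [Matrix.mul_fin_two, mkGL_coe]
    · refine rev_of_conj F P (mkGL !![1,0;0,-1] (by norm_num [Matrix.det_fin_two])) ?_
      refine conj_unit _ _ _ !![-1,-1;0,-1] hP (by norm_num [Matrix.mul_fin_two, ← Matrix.one_fin_two]) ?_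
      show (!![(1:ℂ),0;0,-1])⁻¹ * _ * _ = _
      rw [Matrix.inv_eq_right_inv (by norm_num [Matrix.mul_fin_two, ← Matrix.one_fin_two] :
        (!![(1:ℂ),0;0,-1]) * !![1,0;0,-1] = 1)]
      norm_num [Matrix.mul_fin_two, mkGL_coe]
    · have hdiag : Matrix.diagonal ![μ, μ⁻¹] = !![μ,0;0,μ⁻¹] := by
        ext i j; fin_cases i <;> fin_cases j <;> simp [Matrix.diagonal]
      rw [hdiag] at hP
      refine rev_of_conj F P (mkGL !![0,1;1,0] (by norm_num [Matrix.det_fin_two])) ?_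
      refine conj_unit _ _ _ !![μ⁻¹,0;0,μ] hP
        (by norm_num [Matrix.mul_fin_two, ← Matrix.one_fin_two, mul_inv_cancel₀ hμ, inv_mul_cancel₀ hμ]) ?_
      show (!![(0:ℂ),1;1,0])⁻¹ * _ * _ = _
      rw [Matrix.inv_eq_right_inv (by norm_num [Matrix.mul_fin_two, ← Matrix.one_fin_two] :
        (!![(0:ℂ),1;1,0]) * !![0,1;1,0] = 1)]
      norm_num [Matrix.mul_fin_two, mkGL_coe]
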